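/- With the same setup (w(u) solving w^{r+1}/(r(r+1)) − w/r + 1/(r+1) = u²/2, C_n(r,j) defined by (w^{j+1}−1)/(j+1) = Σ_{n≥0} C_n(r,j)u^{n+1}, and f_j(T) = Σ_{k≥0}(2k+1)!! C_{2k}(r,j)(−T)^k), the identity f_{j+r}(T) = f_j(T) − r·j·T·f_{j-1}(T) holds in ℚ[r,j][[T]]. -/

import Mathlib

noncomputable section

/-- The field `ℚ(r,j)` of rational functions in the two formal variables `r`, `j`. -/
abbrev KK : Type := FractionRing (MvPolynomial (Fin 2) ℚ)

/-- The formal variable `r` as an element of `ℚ(r,j)`. -/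
def Rv : KK := algebraMap (MvPolynomial (Fin 2) ℚ) KK (MvPolynomial.X 0)

/-- The formal variable `j` as an element of `ℚ(r,j)`. -/
def Jv : KK := algebraMap (MvPolynomial (Fin 2) ℚ) KK (MvPolynomial.X 1)

/-- Generalized binomial coefficient `binom(a,k) = a(a-1)⋯(a-k+1)/k!`. -/
def gbinom (a : KK) (k : ℕ) : KK :=
  (∏ i ∈ Finset.range k, (a - (i : KK))) / (k.factorial : KK)

/-- The binomial-series power `(1+v)^a = Σ_k binom(a,k) v^k`, well defined as a power
series when `v` has zero constant term. -/
def bpow (a : KK) (v : PowerSeries KK) : PowerSeries KK :=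
  PowerSeries.mk fun n =>
    ∑ k ∈ Finset.range (n + 1), gbinom a k * PowerSeries.coeff (R := KK) n (v ^ k)

/-- `isW ρ w` says that `w = w(u) ∈ 1 + u + u²·[[u]]` solves
`w^{ρ+1}/(ρ(ρ+1)) - w/ρ + 1/(ρ+1) = u²/2`, where `w^{ρ+1}` is the binomial series
`(1 + (w-1))^{ρ+1}`. -/
def isW (ρ : KK) (w : PowerSeries KK) : Prop :=
  PowerSeries.coeff (R := KK) 0 w = 1 ∧ PowerSeries.coeff (R := KK) 1 w = 1 ∧
    PowerSeries.C (R := KK) (ρ * (ρ + 1))⁻¹ * bpow (ρ + 1) (w - 1)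
        - PowerSeries.C (R := KK) ρ⁻¹ * w + PowerSeries.C (R := KK) (ρ + 1)⁻¹
      = PowerSeries.C (R := KK) (2 : KK)⁻¹ * PowerSeries.X ^ 2

/-- `Cco a w n` is the coefficient `C_n(r,a)`: the coefficient of `u^{n+1}` in
`(w^{a+1} - 1)/(a+1)`. -/
def Cco (a : KK) (w : PowerSeries KK) (n : ℕ) : KK :=
  (a + 1)⁻¹ * PowerSeries.coeff (R := KK) (n + 1) (bpow (a + 1) (w - 1) - 1)

/-- `fT a w` is the series `f_a(T) = Σ_{k≥0} (2k+1)!! C_{2k}(r,a) (-T)^k`. -/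
def fT (a : KK) (w : PowerSeries KK) : PowerSeries KK :=
  PowerSeries.mk fun k =>
    (Nat.doubleFactorial (2 * k + 1) : KK) * Cco a w (2 * k) * (-1) ^ k

/-- The formal derivative `d/dT` of a power series. -/
def psDeriv (f : PowerSeries KK) : PowerSeries KK :=
  PowerSeries.mk fun n => ((n : KK) + 1) * PowerSeries.coeff (R := KK) (n + 1) f


open PowerSeries Finset
open scoped PowerSeries

namespace Stmt4Aux

lemma gbinom_eq_choose (a : KK) (k : ℕ) : gbinom a k = Ring.choose a k := by
  have h1 : (descPochhammer ℤ k).smeval a = ∏ i ∈ Finset.range k, (a - i) := by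
    induction k with
    | zero => simp [descPochhammer_zero, Polynomial.smeval_one]
    | succ k ih =>
      rw [descPochhammer_succ_right, Polynomial.smeval_mul, ih, Finset.prod_range_succ]
      congr 1
      simp [Polynomial.smeval_sub, Polynomial.smeval_X, Polynomial.smeval_natCast]
  have h2 := Ring.descPochhammer_eq_factorial_smul_choose a k
  rw [h1, nsmul_eq_mul] at h2
  rw [gbinom, h2, mul_comm, mul_div_assoc, div_self (Nat.cast_ne_zero.mpr k.factorial_ne_zero), mul_one]

lemma gbinom_vandermonde (a b : KK) (s : ℕ) :
    gbinom (a + b) s = ∑ ij ∈ Finset.HasAntidiagonal.antidiagonal s, gbinom a ij.1 * gbinom b ij.2 := by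
  rw [gbinom_eq_choose, Ring.add_choose_eq s (mul_comm a b)]
  exact Finset.sum_congr rfl fun ij _ => by rw [gbinom_eq_choose, gbinom_eq_choose]

lemma gbinom_succ_mul (a : KK) (k : ℕ) :
    ((k : KK) + 1) * gbinom a (k + 1) = a * gbinom (a - 1) k := by
  have hprod : ∏ i ∈ range (k + 1), (a - (i : KK)) =
      a * ∏ i ∈ range k, (a - 1 - (i : KK)) := by
    rw [Finset.prod_range_succ']
    simp only [Nat.cast_zero, sub_zero]
    rw [mul_comm]
    congr 1
    refine Finset.prod_congr rfl fun i _ => ?_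
    push_cast; ring
  rw [gbinom, gbinom, hprod, Nat.factorial_succ]
  have hk : ((k.factorial : KK)) ≠ 0 := Nat.cast_ne_zero.mpr k.factorial_ne_zero
  have hk1 : ((k : KK) + 1) ≠ 0 := by
    have : ((k + 1 : ℕ) : KK) ≠ 0 := Nat.cast_ne_zero.mpr k.succ_ne_zero
    push_cast at this; exact this
  push_cast
  field_simp

variable {v : PowerSeries KK}

lemma coeff_pow_eq_zero (hv : constantCoeff (R := KK) v = 0) {n k : ℕ} (h : n < k) :
    coeff (R := KK) n (v ^ k) = 0 := by
  obtain ⟨g, rfl⟩ := X_dvd_iff.mpr hv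
  rw [mul_pow, coeff_X_pow_mul', if_neg (by omega)]

lemma coeff_bpow (a : KK) (hv : constantCoeff (R := KK) v = 0) {n N : ℕ} (h : n ≤ N) :
    coeff (R := KK) n (bpow a v) = ∑ k ∈ range (N + 1), gbinom a k * coeff (R := KK) n (v ^ k) := by
  rw [bpow, coeff_mk]
  refine Finset.sum_subset (Finset.range_subset_range.mpr (by omega)) fun k hk hk' => ?_
  rw [coeff_pow_eq_zero hv (by simp only [Finset.mem_range] at hk'; omega), mul_zero]

lemma coeff_bpow' (a : KK) (hv : constantCoeff (R := KK) v = 0) {n N : ℕ} (h : n ≤ N) :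
    coeff (R := KK) n (bpow a v)
      = coeff (R := KK) n (∑ k ∈ range (N + 1), C (R := KK) (gbinom a k) * v ^ k) := by
  rw [coeff_bpow a hv h, map_sum]
  simp [coeff_C_mul]

lemma coeff_mul_congr {f g h : PowerSeries KK} {n : ℕ}
    (hfg : ∀ i ≤ n, coeff (R := KK) i f = coeff (R := KK) i g) :
    coeff (R := KK) n (f * h) = coeff (R := KK) n (g * h) := by
  rw [coeff_mul, coeff_mul]
  exact Finset.sum_congr rfl fun p hp => by
    rw [hfg p.1 (Finset.HasAntidiagonal.antidiagonal.fst_le hp)]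

lemma square_eq_triangles {M : Type*} [AddCommMonoid M] (n : ℕ) (F : ℕ → ℕ → M)
    (hF : ∀ k l, n < k + l → F k l = 0) :
    ∑ k ∈ range (n + 1), ∑ l ∈ range (n + 1), F k l
      = ∑ s ∈ range (n + 1), ∑ ij ∈ Finset.HasAntidiagonal.antidiagonal s, F ij.1 ij.2 := by
  rw [← Finset.sum_product']
  rw [← Finset.sum_biUnion (fun s _ t _ hst => Finset.disjoint_left.mpr fun p hp hp' => by
    rw [Finset.HasAntidiagonal.mem_antidiagonal] at hp hp'
    exact hst (hp ▸ hp'))]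
  refine (Finset.sum_subset ?_ ?_).symm
  · intro p hp
    simp only [Finset.mem_biUnion, Finset.mem_range, Finset.HasAntidiagonal.mem_antidiagonal] at hp
    obtain ⟨s, hs, hps⟩ := hp
    simp only [Finset.mem_product, Finset.mem_range]
    omega
  · intro p hp hp'
    simp only [Finset.mem_biUnion, Finset.mem_range, Finset.HasAntidiagonal.mem_antidiagonal] at hp'
    push_neg at hp'
    exact hF p.1 p.2 (by by_contra hc; exact hp' (p.1 + p.2) (by omega) rfl)

lemma bpow_mul (hv : constantCoeff (R := KK) v = 0) (a b : KK) :
    bpow a v * bpow b v = bpow (a + b) v := by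
  ext n
  rw [coeff_mul_congr (fun i hi => coeff_bpow' a hv hi)]
  rw [mul_comm, coeff_mul_congr (fun i hi => coeff_bpow' b hv hi)]
  have hexp : (∑ k ∈ range (n + 1), C (R := KK) (gbinom b k) * v ^ k) *
      (∑ k ∈ range (n + 1), C (R := KK) (gbinom a k) * v ^ k)
      = ∑ k ∈ range (n + 1), ∑ l ∈ range (n + 1),
          C (R := KK) (gbinom b k * gbinom a l) * v ^ (k + l) := by
    rw [Finset.sum_mul_sum]
    refine Finset.sum_congr rfl fun k _ => Finset.sum_congr rfl fun l _ => ?_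
    rw [map_mul, pow_add]; ring
  rw [hexp]
  have hpush : coeff (R := KK) n (∑ k ∈ range (n + 1), ∑ l ∈ range (n + 1),
      C (R := KK) (gbinom b k * gbinom a l) * v ^ (k + l))
      = ∑ k ∈ range (n + 1), ∑ l ∈ range (n + 1),
          gbinom b k * gbinom a l * coeff (R := KK) n (v ^ (k + l)) := by
    rw [map_sum]
    refine Finset.sum_congr rfl fun k _ => ?_
    rw [map_sum]
    exact Finset.sum_congr rfl fun l _ => by rw [coeff_C_mul]
  rw [hpush,
    square_eq_triangles n (fun k l => gbinom b k * gbinom a l * coeff (R := KK) n (v ^ (k + l)))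
      (fun k l h => by
        show gbinom b k * gbinom a l * coeff (R := KK) n (v ^ (k + l)) = 0
        rw [coeff_pow_eq_zero hv h, mul_zero]),
    coeff_bpow (a + b) hv (le_refl n)]
  refine Finset.sum_congr rfl fun s hs => ?_
  have : a + b = b + a := add_comm a b
  rw [this, gbinom_vandermonde b a s, Finset.sum_mul]
  refine Finset.sum_congr rfl fun ij hij => ?_
  rw [Finset.HasAntidiagonal.mem_antidiagonal] at hij
  rw [hij]


lemma bpow_deriv (hv : PowerSeries.constantCoeff (R := KK) v = 0) (a : KK) :
    d⁄dX KK (bpow a v) = C (R := KK) a * bpow (a - 1) v * d⁄dX KK v := by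
  ext n
  have h1 : coeff (R := KK) n (d⁄dX KK (bpow a v))
      = coeff (R := KK) n (d⁄dX KK (∑ k ∈ range (n + 2), C (R := KK) (gbinom a k) * v ^ k)) := by
    rw [coeff_derivative, coeff_derivative, coeff_bpow' a hv (le_refl (n + 1))]
  have h2 : d⁄dX KK (∑ k ∈ range (n + 2), C (R := KK) (gbinom a k) * v ^ k)
      = (∑ k ∈ range (n + 1), C (R := KK) (gbinom (a - 1) k) * v ^ k) * (C (R := KK) a * d⁄dX KK v) := by
    rw [map_sum, Finset.sum_range_succ']
    have h0 : d⁄dX KK (C (R := KK) (gbinom a 0) * v ^ 0) = 0 := by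
      rw [pow_zero, mul_one, derivative_C]
    rw [h0, add_zero, Finset.sum_mul]
    refine Finset.sum_congr rfl fun k _ => ?_
    have hcast : ((k + 1 : ℕ) : PowerSeries KK) = C (R := KK) ((k : KK) + 1) := by
      rw [← map_natCast (C (R := KK)) (k + 1), Nat.cast_add, Nat.cast_one]
    rw [Derivation.leibniz, Derivation.leibniz_pow, derivative_C, smul_zero, add_zero,
      smul_eq_mul, nsmul_eq_mul, Nat.add_sub_cancel, smul_eq_mul, hcast]
    rw [show C (R := KK) (gbinom a (k + 1)) * (C (R := KK) ((k : KK) + 1) * (v ^ k * d⁄dX KK v))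
        = C (R := KK) (((k : KK) + 1) * gbinom a (k + 1)) * v ^ k * d⁄dX KK v from by
      rw [map_mul]; ring]
    rw [gbinom_succ_mul, map_mul]
    ring
  rw [h1, h2, coeff_mul_congr (fun i hi => (coeff_bpow' (a - 1) hv hi).symm)]
  congr 1
  ring

lemma algmap_ne (p : MvPolynomial (Fin 2) ℚ) (h : p ≠ 0) :
    algebraMap (MvPolynomial (Fin 2) ℚ) KK p ≠ 0 := fun hc =>
  h (IsFractionRing.injective (MvPolynomial (Fin 2) ℚ) KK (by rw [hc, map_zero]))

lemma ne_zero_of_eval (p : MvPolynomial (Fin 2) ℚ) (c : Fin 2 → ℚ)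
    (h : MvPolynomial.eval c p ≠ 0) : p ≠ 0 := fun hp => h (by rw [hp, map_zero])

lemma hR : Rv ≠ 0 := algmap_ne _ (ne_zero_of_eval _ (fun _ => 1) (by simp))

lemma hR1 : Rv + 1 ≠ 0 := by
  rw [Rv, ← map_one (algebraMap (MvPolynomial (Fin 2) ℚ) KK), ← map_add]
  exact algmap_ne _ (ne_zero_of_eval _ (fun _ => 1) (by simp))

lemma hJ : Jv ≠ 0 := algmap_ne _ (ne_zero_of_eval _ (fun _ => 1) (by simp))

lemma hJ1 : Jv + 1 ≠ 0 := by
  rw [Jv, ← map_one (algebraMap (MvPolynomial (Fin 2) ℚ) KK), ← map_add]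
  exact algmap_ne _ (ne_zero_of_eval _ (fun _ => 1) (by simp))

lemma hJR1 : Jv + Rv + 1 ≠ 0 := by
  rw [Jv, Rv, ← map_one (algebraMap (MvPolynomial (Fin 2) ℚ) KK), ← map_add, ← map_add]
  refine algmap_ne _ (ne_zero_of_eval _ (fun _ => 1) ?_)
  simp
  norm_num

lemma deriv_C_mul (c : KK) (f : PowerSeries KK) :
    d⁄dX KK (C (R := KK) c * f) = C (R := KK) c * d⁄dX KK f := by
  rw [Derivation.leibniz, derivative_C, smul_zero, add_zero, smul_eq_mul]

end Stmt4Aux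

-- main proof
open Stmt4Aux

set_option maxHeartbeats 1000000 in
/-- The identity `f_{j+r}(T) = f_j(T) - r·j·T·f_{j-1}(T)` in `ℚ(r,j)[[T]]`, where
`f_a(T) = Σ_k (2k+1)!! C_{2k}(r,a)(-T)^k` and the `C_n(r,a)` come from the solution `w`
of `w^{r+1}/(r(r+1)) - w/r + 1/(r+1) = u²/2`. -/
theorem stmt4 (w : PowerSeries KK) (hw : isW Rv w) :
    fT (Jv + Rv) w
      = fT Jv w - PowerSeries.C (R := KK) (Rv * Jv) * PowerSeries.X * fT (Jv - 1) w := by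
  obtain ⟨hw0, hw1, heq⟩ := hw
  have hv : constantCoeff (R := KK) (w - 1) = 0 := by
    rw [← coeff_zero_eq_constantCoeff, map_sub, hw0]
    simp
  have hdvw : d⁄dX KK (w - 1) = d⁄dX KK w := by
    rw [map_sub, Derivation.map_one_eq_zero, sub_zero]
  -- derivative of the algebraic equation
  have h2X : d⁄dX KK (C (R := KK) (2:KK)⁻¹ * (X : PowerSeries KK) ^ 2) = X := by
    rw [deriv_C_mul, Derivation.leibniz_pow, derivative_X, smul_eq_mul, mul_one,
      nsmul_eq_mul, Nat.cast_ofNat, ← map_ofNat (C (R := KK)) 2, ← mul_assoc, ← map_mul]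
    norm_num
  have hD : C (R := KK) (Rv * (Rv + 1))⁻¹ * (C (R := KK) (Rv + 1) * bpow Rv (w - 1) * d⁄dX KK w)
      - C (R := KK) Rv⁻¹ * d⁄dX KK w = X := by
    have h := congrArg (d⁄dX KK) heq
    rw [map_add, map_sub, deriv_C_mul, deriv_C_mul, bpow_deriv hv, add_sub_cancel_right,
      hdvw, derivative_C, add_zero, h2X] at h
    exact h
  have hc1 : C (R := KK) Rv * C (R := KK) (Rv * (Rv + 1))⁻¹ * C (R := KK) (Rv + 1) = 1 := by
    rw [← map_mul, ← map_mul, ← map_one (C (R := KK))]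
    congr 1
    field_simp
    exact div_self (mul_ne_zero hR hR1)
  have hCr : C (R := KK) Rv * C (R := KK) Rv⁻¹ = 1 := by
    rw [← map_mul, mul_inv_cancel₀ hR, map_one]
  have h1 : (bpow Rv (w - 1) - 1) * d⁄dX KK w = C (R := KK) Rv * X := by
    linear_combination C (R := KK) Rv * hD
      - (bpow Rv (w - 1) * d⁄dX KK w) * hc1 + (d⁄dX KK w) * hCr
  have h2 : bpow (Jv + Rv) (w - 1) * d⁄dX KK w - bpow Jv (w - 1) * d⁄dX KK w
      = C (R := KK) Rv * X * bpow Jv (w - 1) := by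
    have h := congrArg (fun z => bpow Jv (w - 1) * z) h1
    rw [show bpow Jv (w - 1) * ((bpow Rv (w - 1) - 1) * d⁄dX KK w)
        = bpow Jv (w - 1) * bpow Rv (w - 1) * d⁄dX KK w - bpow Jv (w - 1) * d⁄dX KK w
        from by ring, bpow_mul hv] at h
    linear_combination h
  have h3 : ∀ a : KK, C (R := KK) (a + 1) * (bpow a (w - 1) * d⁄dX KK w)
      = d⁄dX KK (bpow (a + 1) (w - 1)) := by
    intro a
    rw [bpow_deriv hv, add_sub_cancel_right, hdvw]
    ring
  have hCjr : C (R := KK) (Jv + Rv + 1)⁻¹ * C (R := KK) (Jv + Rv + 1) = 1 := by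
    rw [← map_mul, inv_mul_cancel₀ hJR1, map_one]
  have hCj : C (R := KK) (Jv + 1)⁻¹ * C (R := KK) (Jv + 1) = 1 := by
    rw [← map_mul, inv_mul_cancel₀ hJ1, map_one]
  have hMAIN : C (R := KK) (Jv + Rv + 1)⁻¹ * d⁄dX KK (bpow (Jv + Rv + 1) (w - 1))
      - C (R := KK) (Jv + 1)⁻¹ * d⁄dX KK (bpow (Jv + 1) (w - 1))
      = C (R := KK) Rv * X * bpow Jv (w - 1) := by
    linear_combination (-(C (R := KK) (Jv + Rv + 1)⁻¹)) * (h3 (Jv + Rv))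
      + (C (R := KK) (Jv + 1)⁻¹) * (h3 Jv) + h2
      + (bpow (Jv + Rv) (w - 1) * d⁄dX KK w) * hCjr
      - (bpow Jv (w - 1) * d⁄dX KK w) * hCj
  -- coefficient facts
  have hA : ∀ (a : KK) (n : ℕ), coeff (R := KK) (n + 1) (bpow (a + 1) (w - 1) - 1)
      = coeff (R := KK) (n + 1) (bpow (a + 1) (w - 1)) := by
    intro a n
    rw [map_sub, coeff_one]
    simp
  have hB : ∀ (a : KK), a + 1 ≠ 0 → ∀ n : ℕ,
      coeff (R := KK) (n + 1) (bpow (a + 1) (w - 1)) = (a + 1) * Cco a w n := by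
    intro a ha n
    rw [Cco, ← mul_assoc, mul_inv_cancel₀ ha, one_mul, hA]
  have hCco0 : ∀ a : KK, a + 1 ≠ 0 → Cco a w 0 = 1 := by
    intro a ha
    rw [Cco, hA, coeff_bpow (a + 1) hv (le_refl 1), Finset.sum_range_succ,
      Finset.sum_range_one]
    have e0 : coeff (R := KK) 1 ((w - 1) ^ 0) = 0 := by rw [pow_zero, coeff_one]; simp
    have e1 : coeff (R := KK) 1 ((w - 1) ^ 1) = 1 := by
      rw [pow_one, map_sub, hw1, coeff_one]; simp
    have g1 : gbinom (a + 1) 1 = a + 1 := by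
      simp [gbinom]
    rw [e0, e1, g1, mul_zero, zero_add, mul_one, inv_mul_cancel₀ ha]
  have hJm : Jv - 1 + 1 = Jv := by ring
  ext k
  rcases k with _ | m
  · have hz : coeff (R := KK) 0 (C (R := KK) (Rv * Jv) * X * fT (Jv - 1) w) = 0 := by
      rw [coeff_zero_eq_constantCoeff, map_mul, map_mul, constantCoeff_X]
      ring
    rw [map_sub, hz, sub_zero]
    simp only [fT, coeff_mk]
    norm_num [hCco0 (Jv + Rv) hJR1, hCco0 Jv hJ1]
  · -- coefficient 2m+2 of hMAIN
    have hbj : coeff (R := KK) (2 * m + 1) (bpow Jv (w - 1)) = Jv * Cco (Jv - 1) w (2 * m) := by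
      have h := hB (Jv - 1) (by rw [hJm]; exact hJ) (2 * m)
      rw [hJm] at h
      exact h
    have hrhs : coeff (R := KK) (2 * m + 2) (C (R := KK) Rv * X * bpow Jv (w - 1))
        = Rv * (Jv * Cco (Jv - 1) w (2 * m)) := by
      rw [mul_assoc, coeff_C_mul, show 2 * m + 2 = (2 * m + 1) + 1 from by omega,
        coeff_succ_X_mul, hbj]
    have hc := congrArg (coeff (R := KK) (2 * m + 2)) hMAIN
    rw [map_sub, coeff_C_mul, coeff_C_mul, coeff_derivative, coeff_derivative,
      hB (Jv + Rv) hJR1 (2 * m + 2), hB Jv hJ1 (2 * m + 2), hrhs] at hc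
    -- now hc : (Jv+Rv+1)⁻¹ * ((Jv+Rv+1) * A * c3) - (Jv+1)⁻¹ * ((Jv+1) * B * c3)
    --        = Rv * (Jv * Cc)
    have hjr' : (Jv + Rv + 1)⁻¹ * (Jv + Rv + 1) = 1 := inv_mul_cancel₀ hJR1
    have hj' : (Jv + 1)⁻¹ * (Jv + 1) = 1 := inv_mul_cancel₀ hJ1
    set A := Cco (Jv + Rv) w (2 * m + 2) with hAdef
    set B := Cco Jv w (2 * m + 2) with hBdef
    set Cc := Cco (Jv - 1) w (2 * m) with hCdef
    set c3 : KK := ((2 * m + 2 : ℕ) : KK) + 1 with hc3def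
    have hc' : A * c3 - B * c3 = Rv * (Jv * Cc) := by
      linear_combination hc - (A * c3) * hjr' + (B * c3) * hj'
    -- final goal
    have hsh : coeff (R := KK) (m + 1) (C (R := KK) (Rv * Jv) * X * fT (Jv - 1) w)
        = (Rv * Jv) * ((Nat.doubleFactorial (2 * m + 1) : KK) * Cc * (-1) ^ m) := by
      rw [mul_assoc, coeff_C_mul, coeff_succ_X_mul]
      simp only [fT, coeff_mk, hCdef]
    rw [map_sub, hsh]
    simp only [fT, coeff_mk]
    have hidx : 2 * (m + 1) = 2 * m + 2 := by ring
    rw [hidx, ← hAdef, ← hBdef]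
    have hdf : (Nat.doubleFactorial (2 * m + 2 + 1) : KK)
        = ((2 * m + 3 : ℕ) : KK) * (Nat.doubleFactorial (2 * m + 1) : KK) := by
      have h9 : 2 * m + 2 + 1 = (2 * m + 1) + 2 := by omega
      rw [h9, Nat.doubleFactorial_add_two]
      push_cast
      ring
    rw [hdf]
    have hc3 : c3 = ((2 * m + 3 : ℕ) : KK) := by rw [hc3def]; push_cast; ring
    rw [pow_succ]
    linear_combination (-(-1 : KK) ^ m * (Nat.doubleFactorial (2 * m + 1) : KK)) * hc'
      + ((-1 : KK) ^ m * (Nat.doubleFactorial (2 * m + 1) : KK) * (A - B)) * hc3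

end
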